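/- Let $X$ and $Y$ be independent $\mathbb{R}^d$-valued random variables with laws having densities $\rho^X,\rho^Y\in L^1(\mathbb{R}^d)$. Suppose there exist constants $\kappa_1,\kappa_2>0$ and exponents $p_1,p_2\in(1,\infty)$ with conjugates $r_1,r_2$ such that $\sum_{z\in\mathbb{Z}^d}\|\mathbf{1}_{Q_z}\rho^X\|_{L^{r_1}}\le\kappa_1$ and $\sum_{z\in\mathbb{Z}^d}\|\mathbf{1}_{Q_z}\rho^Y\|_{L^{r_2}}\le\kappa_2$. Then for any nonnegative measurable $f:\mathbb{R}^d\times\mathbb{R}^d\to\mathbb{R}$, $$\mathbf{E} f(X,Y)\le\kappa_1\kappa_2\sup_{z,z'\in\mathbb{Z}^d}\Big(\int_{Q_{z'}}\|\mathbf{1}_{Q_z}f(\cdot,y)\|_{L^{p_1}}^{p_2}\,dy\Big)^{1/p_2}.$$ -/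

import Mathlib

open MeasureTheory ENNReal

/-- Mixed Krylov-type duality estimate for independent random variables with
densities having summable localized dual norms. -/
theorem stmt_2 {d : ℕ} {Ω : Type*} [MeasurableSpace Ω] (P : Measure Ω)
    [IsProbabilityMeasure P]
    (X Y : Ω → (Fin d → ℝ)) (hX : Measurable X) (hY : Measurable Y)
    (ρX ρY : (Fin d → ℝ) → ℝ) (hρX : Integrable ρX) (hρY : Integrable ρY)
    (hlawX : P.map X = volume.withDensity fun x => ENNReal.ofReal (ρX x))
    (hlawY : P.map Y = volume.withDensity fun x => ENNReal.ofReal (ρY x))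
    (hindep : P.map (fun ω => (X ω, Y ω)) = (P.map X).prod (P.map Y))
    (p₁ p₂ : ℝ) (hp₁ : 1 < p₁) (hp₂ : 1 < p₂)
    (r₁ r₂ : ℝ) (hr₁ : r₁ = p₁ / (p₁ - 1)) (hr₂ : r₂ = p₂ / (p₂ - 1))
    (κ₁ κ₂ : ℝ) (hκ₁ : 0 < κ₁) (hκ₂ : 0 < κ₂)
    (Q : (Fin d → ℤ) → Set (Fin d → ℝ))
    (hQ : ∀ z, Q z = {x | ∀ i, (z i : ℝ) < x i ∧ x i ≤ (z i : ℝ) + 1})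
    (hX_loc : ∑' z, eLpNorm ρX (ENNReal.ofReal r₁) (volume.restrict (Q z)) ≤ ENNReal.ofReal κ₁)
    (hY_loc : ∑' z, eLpNorm ρY (ENNReal.ofReal r₂) (volume.restrict (Q z)) ≤ ENNReal.ofReal κ₂)
    (f : (Fin d → ℝ) × (Fin d → ℝ) → ℝ) (hf_nonneg : ∀ x, 0 ≤ f x)
    (hf_meas : Measurable f) :
    ∫⁻ ω, ENNReal.ofReal (f (X ω, Y ω)) ∂P ≤
      ENNReal.ofReal κ₁ * ENNReal.ofReal κ₂ *
        ⨆ z, ⨆ z', (∫⁻ y in Q z',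
          (eLpNorm (fun x => f (x, y)) (ENNReal.ofReal p₁) (volume.restrict (Q z))) ^ p₂) ^ (1 / p₂) := by
  classical
  -- measurable representatives of the densities
  obtain ⟨ρX', hρX'm, hρXeq⟩ : ∃ g, Measurable g ∧ ρX =ᵐ[volume] g :=
    ⟨hρX.1.aemeasurable.mk ρX, hρX.1.aemeasurable.measurable_mk, hρX.1.aemeasurable.ae_eq_mk⟩
  obtain ⟨ρY', hρY'm, hρYeq⟩ : ∃ g, Measurable g ∧ ρY =ᵐ[volume] g :=
    ⟨hρY.1.aemeasurable.mk ρY, hρY.1.aemeasurable.measurable_mk, hρY.1.aemeasurable.ae_eq_mk⟩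
  set F : (Fin d → ℝ) × (Fin d → ℝ) → ℝ≥0∞ := fun p => ENNReal.ofReal (f p) with hFdef
  have hFmeas : Measurable F := ENNReal.measurable_ofReal.comp hf_meas
  set gX : (Fin d → ℝ) → ℝ≥0∞ := fun x => ENNReal.ofReal (ρX' x) with hgXdef
  set gY : (Fin d → ℝ) → ℝ≥0∞ := fun x => ENNReal.ofReal (ρY' x) with hgYdef
  have hgXmeas : Measurable gX := ENNReal.measurable_ofReal.comp hρX'm
  have hgYmeas : Measurable gY := ENNReal.measurable_ofReal.comp hρY'm
  -- basic exponent facts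
  have hconj1 : p₁.HolderConjugate r₁ :=
    (Real.holderConjugate_iff_eq_conjExponent hp₁).2 hr₁
  have hconj2 : p₂.HolderConjugate r₂ :=
    (Real.holderConjugate_iff_eq_conjExponent hp₂).2 hr₂
  have hp₁pos : 0 < p₁ := hconj1.pos
  have hp₂pos : 0 < p₂ := hconj2.pos
  have hr₁pos : 0 < r₁ := hconj1.symm.pos
  have hr₂pos : 0 < r₂ := hconj2.symm.pos
  -- cube facts
  have hQmeas : ∀ z, MeasurableSet (Q z) := by
    intro z
    have : Q z = Set.pi Set.univ (fun i => Set.Ioc ((z i : ℝ)) ((z i : ℝ) + 1)) := by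
      rw [hQ]; ext x; simp [Set.mem_pi, Set.mem_Ioc]
    rw [this]
    exact MeasurableSet.pi Set.countable_univ fun i _ => measurableSet_Ioc
  have hQdisj : Pairwise (Function.onFun Disjoint Q) := by
    intro z z' hne
    rw [Function.onFun, Set.disjoint_left]
    intro x hxz hxz'
    apply hne
    funext i
    rw [hQ] at hxz hxz'
    obtain ⟨h1, h2⟩ := hxz i
    obtain ⟨h3, h4⟩ := hxz' i
    have hA : (z i : ℝ) < (z' i : ℝ) + 1 := lt_of_lt_of_le h1 h4
    have hB : (z' i : ℝ) < (z i : ℝ) + 1 := lt_of_lt_of_le h3 h2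
    have hA' : z i < z' i + 1 := by exact_mod_cast hA
    have hB' : z' i < z i + 1 := by exact_mod_cast hB
    omega
  have hQcover : (⋃ z, Q z) = Set.univ := by
    ext x
    simp only [Set.mem_iUnion, Set.mem_univ, iff_true]
    refine ⟨fun i => ⌈x i⌉ - 1, ?_⟩
    rw [hQ]
    intro i
    have h1 : (⌈x i⌉ : ℝ) < x i + 1 := Int.ceil_lt_add_one (x i)
    have h2 : x i ≤ (⌈x i⌉ : ℝ) := Int.le_ceil (x i)
    constructor
    · push_cast; linarith
    · push_cast; linarith
  -- localized dual norms
  set NX : (Fin d → ℤ) → ℝ≥0∞ :=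
    fun z => eLpNorm ρX' (ENNReal.ofReal r₁) (volume.restrict (Q z)) with hNXdef
  set NY : (Fin d → ℤ) → ℝ≥0∞ :=
    fun z => eLpNorm ρY' (ENNReal.ofReal r₂) (volume.restrict (Q z)) with hNYdef
  have hNX_eq : ∀ z, NX z = eLpNorm ρX (ENNReal.ofReal r₁) (volume.restrict (Q z)) :=
    fun z => (eLpNorm_congr_ae (ae_restrict_of_ae hρXeq)).symm
  have hNY_eq : ∀ z, NY z = eLpNorm ρY (ENNReal.ofReal r₂) (volume.restrict (Q z)) :=
    fun z => (eLpNorm_congr_ae (ae_restrict_of_ae hρYeq)).symm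
  have hNX_sum : ∑' z, NX z ≤ ENNReal.ofReal κ₁ := by
    rw [tsum_congr hNX_eq]; exact hX_loc
  have hNY_sum : ∑' z, NY z ≤ ENNReal.ofReal κ₂ := by
    rw [tsum_congr hNY_eq]; exact hY_loc
  have hNX_ne_top : ∀ z, NX z ≠ ∞ := fun z =>
    ne_top_of_le_ne_top ENNReal.ofReal_ne_top ((ENNReal.le_tsum z).trans hNX_sum)
  -- eLpNorm bounds for the densities
  have hNXbound : ∀ z, (∫⁻ x in Q z, gX x ^ r₁) ^ (1 / r₁) ≤ NX z := by
    intro z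
    simp only [hNXdef]
    rw [eLpNorm_eq_lintegral_rpow_enorm_toReal (by simp [hr₁pos, hr₁pos.le]) (by simp),
      ENNReal.toReal_ofReal hr₁pos.le]
    refine ENNReal.rpow_le_rpow (lintegral_mono fun x => ?_) (by positivity)
    exact ENNReal.rpow_le_rpow (Real.ofReal_le_enorm _) hr₁pos.le
  have hNYbound : ∀ z, (∫⁻ y in Q z, gY y ^ r₂) ^ (1 / r₂) ≤ NY z := by
    intro z
    simp only [hNYdef]
    rw [eLpNorm_eq_lintegral_rpow_enorm_toReal (by simp [hr₂pos, hr₂pos.le]) (by simp),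
      ENNReal.toReal_ofReal hr₂pos.le]
    refine ENNReal.rpow_le_rpow (lintegral_mono fun x => ?_) (by positivity)
    exact ENNReal.rpow_le_rpow (Real.ofReal_le_enorm _) hr₂pos.le
  -- the eLpNorm of the sections of f
  have hA : ∀ (z : Fin d → ℤ) (y : Fin d → ℝ),
      eLpNorm (fun x => f (x, y)) (ENNReal.ofReal p₁) (volume.restrict (Q z))
        = (∫⁻ x in Q z, F (x, y) ^ p₁) ^ (1 / p₁) := by
    intro z y
    rw [eLpNorm_eq_lintegral_rpow_enorm_toReal (by simp [hp₁pos, hp₁pos.le]) (by simp),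
      ENNReal.toReal_ofReal hp₁pos.le]
    congr 1
    refine lintegral_congr fun x => ?_
    rw [hFdef]
    rw [Real.enorm_eq_ofReal (hf_nonneg _)]
  set S : ℝ≥0∞ := ⨆ z, ⨆ z', (∫⁻ y in Q z',
      (eLpNorm (fun x => f (x, y)) (ENNReal.ofReal p₁) (volume.restrict (Q z))) ^ p₂) ^ (1 / p₂)
    with hSdef
  -- Step 1: rewrite the expectation using densities
  have hμX : P.map X = volume.withDensity gX :=
    hlawX.trans (withDensity_congr_ae (hρXeq.fun_comp ENNReal.ofReal))
  have hμY : P.map Y = volume.withDensity gY :=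
    hlawY.trans (withDensity_congr_ae (hρYeq.fun_comp ENNReal.ofReal))
  have hinner_meas : Measurable fun y => ∫⁻ x, F (x, y) ∂(volume.withDensity gX) :=
    Measurable.lintegral_prod_left' hFmeas
  have step1 : ∫⁻ ω, ENNReal.ofReal (f (X ω, Y ω)) ∂P
      = ∫⁻ y, gY y * ∫⁻ x, gX x * F (x, y) ∂volume ∂volume := by
    have h1 : ∫⁻ ω, ENNReal.ofReal (f (X ω, Y ω)) ∂P
        = ∫⁻ p, F p ∂((volume.withDensity gX).prod (volume.withDensity gY)) := by
      rw [← hμX, ← hμY, ← hindep, lintegral_map hFmeas (hX.prodMk hY)]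
    rw [h1, lintegral_prod_symm F hFmeas.aemeasurable,
      lintegral_withDensity_eq_lintegral_mul volume hgYmeas hinner_meas]
    refine lintegral_congr fun y => ?_
    simp only [Pi.mul_apply]
    congr 1
    have hm : Measurable fun x => F (x, y) := hFmeas.comp measurable_prodMk_right
    rw [lintegral_withDensity_eq_lintegral_mul volume hgXmeas hm]
    rfl
  -- inner integrals over cubes
  set I : (Fin d → ℤ) → (Fin d → ℝ) → ℝ≥0∞ :=
    fun z y => ∫⁻ x in Q z, gX x * F (x, y) ∂volume with hIdef
  have hI_meas : ∀ z, Measurable (I z) := by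
    intro z
    exact Measurable.lintegral_prod_left'
      (f := fun q : (Fin d → ℝ) × (Fin d → ℝ) => gX q.1 * F q)
      ((hgXmeas.comp measurable_fst).mul hFmeas)
  -- Step 2: decompose into cubes
  have step2 : ∫⁻ y, gY y * ∫⁻ x, gX x * F (x, y) ∂volume ∂volume
      = ∑' z', ∑' z, ∫⁻ y in Q z', gY y * I z y ∂volume := by
    have hx : ∀ y, (∫⁻ x, gX x * F (x, y) ∂volume) = ∑' z, I z y := by
      intro y
      rw [← setLIntegral_univ, ← hQcover, lintegral_iUnion hQmeas hQdisj]
    calc ∫⁻ y, gY y * ∫⁻ x, gX x * F (x, y) ∂volume ∂volume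
        = ∫⁻ y, ∑' z, gY y * I z y ∂volume := by
          refine lintegral_congr fun y => ?_
          rw [hx y, ENNReal.tsum_mul_left]
      _ = ∑' z', ∫⁻ y in Q z', ∑' z, gY y * I z y ∂volume := by
          rw [← setLIntegral_univ, ← hQcover, lintegral_iUnion hQmeas hQdisj]
      _ = ∑' z', ∑' z, ∫⁻ y in Q z', gY y * I z y ∂volume := by
          refine tsum_congr fun z' => ?_
          exact lintegral_tsum fun z => (hgYmeas.mul (hI_meas z)).aemeasurable
  -- Step 3: bound each term using Hölder twice
  have key : ∀ z z' : Fin d → ℤ,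
      ∫⁻ y in Q z', gY y * I z y ∂volume ≤ NX z * (NY z' * S) := by
    intro z z'
    -- first Hölder (in x)
    have h1 : ∀ y, I z y ≤ (∫⁻ x in Q z, F (x, y) ^ p₁) ^ (1 / p₁) * NX z := by
      intro y
      have := ENNReal.lintegral_mul_le_Lp_mul_Lq (volume.restrict (Q z)) hconj1
        (f := fun x => F (x, y)) (g := gX)
        ((hFmeas.comp measurable_prodMk_right).aemeasurable) hgXmeas.aemeasurable
      calc I z y = ∫⁻ x in Q z, ((fun x => F (x, y)) * gX) x ∂volume := by
            refine lintegral_congr fun x => ?_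
            simp [mul_comm]
        _ ≤ (∫⁻ x in Q z, F (x, y) ^ p₁) ^ (1 / p₁) * (∫⁻ x in Q z, gX x ^ r₁) ^ (1 / r₁) := this
        _ ≤ (∫⁻ x in Q z, F (x, y) ^ p₁) ^ (1 / p₁) * NX z :=
            mul_le_mul' le_rfl (hNXbound z)
    set A : (Fin d → ℝ) → ℝ≥0∞ := fun y => (∫⁻ x in Q z, F (x, y) ^ p₁) ^ (1 / p₁) with hAdef
    have hA_meas : Measurable A := by
      refine Measurable.pow_const ?_ _
      exact Measurable.lintegral_prod_left'
        (f := fun q : (Fin d → ℝ) × (Fin d → ℝ) => F q ^ p₁)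
        (hFmeas.pow_const _)
    -- second Hölder (in y)
    have h2 : ∫⁻ y in Q z', A y * gY y ∂volume
        ≤ (∫⁻ y in Q z', A y ^ p₂) ^ (1 / p₂) * (∫⁻ y in Q z', gY y ^ r₂) ^ (1 / r₂) :=
      ENNReal.lintegral_mul_le_Lp_mul_Lq (volume.restrict (Q z')) hconj2
        hA_meas.aemeasurable hgYmeas.aemeasurable
    have hAS : (∫⁻ y in Q z', A y ^ p₂) ^ (1 / p₂) ≤ S := by
      have heq : (∫⁻ y in Q z', A y ^ p₂) ^ (1 / p₂)
          = (∫⁻ y in Q z',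
              (eLpNorm (fun x => f (x, y)) (ENNReal.ofReal p₁) (volume.restrict (Q z))) ^ p₂)
            ^ (1 / p₂) := by
        congr 1
        refine lintegral_congr fun y => ?_
        rw [hA z y]
      rw [heq, hSdef]
      exact le_iSup₂ (f := fun w w' => (∫⁻ y in Q w',
        (eLpNorm (fun x => f (x, y)) (ENNReal.ofReal p₁) (volume.restrict (Q w))) ^ p₂)
          ^ (1 / p₂)) z z'
    calc ∫⁻ y in Q z', gY y * I z y ∂volume
        ≤ ∫⁻ y in Q z', gY y * (A y * NX z) ∂volume :=
          lintegral_mono fun y => mul_le_mul' le_rfl (h1 y)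
      _ = ∫⁻ y in Q z', NX z * (A y * gY y) ∂volume := by
          refine lintegral_congr fun y => ?_
          ring
      _ = NX z * ∫⁻ y in Q z', A y * gY y ∂volume :=
          lintegral_const_mul' _ _ (hNX_ne_top z)
      _ ≤ NX z * ((∫⁻ y in Q z', A y ^ p₂) ^ (1 / p₂) * (∫⁻ y in Q z', gY y ^ r₂) ^ (1 / r₂)) :=
          mul_le_mul' le_rfl h2
      _ ≤ NX z * (S * NY z') :=
          mul_le_mul' le_rfl (mul_le_mul' hAS (hNYbound z'))
      _ = NX z * (NY z' * S) := by ring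
  -- combine
  calc ∫⁻ ω, ENNReal.ofReal (f (X ω, Y ω)) ∂P
      = ∑' z', ∑' z, ∫⁻ y in Q z', gY y * I z y ∂volume := by rw [step1, step2]
    _ ≤ ∑' z' : Fin d → ℤ, ∑' z : Fin d → ℤ, NX z * (NY z' * S) :=
        ENNReal.tsum_le_tsum fun z' => ENNReal.tsum_le_tsum fun z => key z z'
    _ = ∑' z' : Fin d → ℤ, (∑' z, NX z) * (NY z' * S) := by
        simp_rw [ENNReal.tsum_mul_right]
    _ = (∑' z, NX z) * ∑' z' : Fin d → ℤ, (NY z' * S) := ENNReal.tsum_mul_left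
    _ = (∑' z, NX z) * ((∑' z', NY z') * S) := by rw [ENNReal.tsum_mul_right]
    _ ≤ ENNReal.ofReal κ₁ * (ENNReal.ofReal κ₂ * S) :=
        mul_le_mul' hNX_sum (mul_le_mul' hNY_sum le_rfl)
    _ = ENNReal.ofReal κ₁ * ENNReal.ofReal κ₂ * S := by ring
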